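/- Let Z = Z^{BGW} be the formal power series determined by the Virasoro-type constraints (2k+1)!! ∂Z/∂t_k = L̂_k Z for all k ≥ 0, where L̂_m = (ħ/2) Σ_{i+j=m−1} (2i+1)!!(2j+1)!! ∂²/∂t_i∂t_j + Σ_{i≥0} ((2i+2m+1)!!/(2i−1)!!) t_i ∂/∂t_{i+m} + (1/8)δ_{m,0}. Then the restriction of log Z to t₁ = t₂ = ... = 0 satisfies log Z(t₀,0,0,...) = −(1/8)log(1−t₀); in particular ∂²_{t₀} log Z(t₀,0,0,...) = 1/(8(1−t₀)²). -/

import Mathlib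

open Finset

/-- Formal partial derivative `∂/∂t_k` on formal power series in the variables
`t₀, t₁, t₂, ...`. -/
noncomputable def pd (k : ℕ) (F : MvPowerSeries ℕ ℝ) : MvPowerSeries ℕ ℝ :=
  fun n => ((n k : ℝ) + 1) * F (n + Finsupp.single k 1)

/-- The (coefficientwise convergent) infinite sum
`Σ_{i≥0} ((2i+2m+1)!!/(2i−1)!!) t_i ∂/∂t_{i+m}` applied to `F`. -/
noncomputable def dilatationTerm (m : ℕ) (F : MvPowerSeries ℕ ℝ) :
    MvPowerSeries ℕ ℝ :=
  fun n => ∑ i ∈ n.support,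
    ((Nat.doubleFactorial (2 * i + 2 * m + 1) : ℝ) /
        (Nat.doubleFactorial (2 * i - 1) : ℝ)) *
      (MvPowerSeries.coeff n (MvPowerSeries.X i * pd (i + m) F))

/-- The operator
`L̂_m = (ħ/2) Σ_{i+j=m−1} (2i+1)!!(2j+1)!! ∂²/∂t_i∂t_j
  + Σ_{i≥0} ((2i+2m+1)!!/(2i−1)!!) t_i ∂/∂t_{i+m} + (1/8)δ_{m,0}`
(the first sum is empty for `m = 0`, and `(−1)!! = 1`). -/
noncomputable def Lhat (hbar : ℝ) (m : ℕ) (F : MvPowerSeries ℕ ℝ) :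
    MvPowerSeries ℕ ℝ :=
  (hbar / 2) •
      (if m = 0 then 0 else
        ∑ p ∈ Finset.HasAntidiagonal.antidiagonal (m - 1),
          ((Nat.doubleFactorial (2 * p.1 + 1) *
              Nat.doubleFactorial (2 * p.2 + 1) : ℕ) : ℝ) • pd p.1 (pd p.2 F))
    + dilatationTerm m F
    + (if m = 0 then ((1 : ℝ) / 8) • F else 0)

noncomputable def aC (n : ℕ) : ℝ := (∏ j ∈ Finset.range n, ((1:ℝ)/8 + j)) / n.factorial

lemma aC_zero : aC 0 = 1 := by simp [aC]

lemma aC_rec (n : ℕ) : ((n:ℝ)+1) * aC (n+1) = ((1:ℝ)/8 + n) * aC n := by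
  have h1 : ((n.factorial :ℕ) : ℝ) ≠ 0 := by exact_mod_cast n.factorial_ne_zero
  simp only [aC, Finset.prod_range_succ, Nat.factorial_succ]
  push_cast
  field_simp

lemma aC_nonneg (n : ℕ) : 0 ≤ aC n := by
  apply div_nonneg _ (by positivity)
  exact Finset.prod_nonneg fun j _ => by positivity

lemma aC_le_one (n : ℕ) : aC n ≤ 1 := by
  induction n with
  | zero => simp [aC_zero]
  | succ m ih =>
    have h := aC_rec m
    nlinarith [aC_nonneg m, aC_nonneg (m+1), Nat.cast_nonneg (α := ℝ) m]

noncomputable def pS : FormalMultilinearSeries ℝ ℝ ℝ :=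
  fun n => ContinuousMultilinearMap.mkPiRing ℝ (Fin n) (aC n)

lemma pS_radius : 1 ≤ pS.radius := by
  apply pS.le_radius_of_bound 1
  intro n
  rw [show ‖pS n‖ = ‖aC n‖ from ContinuousMultilinearMap.norm_mkPiRing ..]
  simp only [NNReal.coe_one, one_pow, mul_one, Real.norm_eq_abs,
    abs_of_nonneg (aC_nonneg n)]
  exact aC_le_one n

lemma hball : HasFPowerSeriesOnBall pS.sum pS 0 1 :=
  (pS.hasFPowerSeriesOnBall (lt_of_lt_of_le one_pos pS_radius)).mono one_pos pS_radius

lemma mem_ball {y : ℝ} (hy : |y| < 1) : y ∈ Metric.eball (0:ℝ) 1 := by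
  rw [Metric.mem_eball, edist_dist, dist_zero_right, Real.norm_eq_abs]
  exact ENNReal.ofReal_lt_one.2 hy

lemma hsum {y : ℝ} (hy : |y| < 1) : HasSum (fun n => aC n * y ^ n) (pS.sum y) := by
  have h := hball.hasSum (by simpa using mem_ball hy)
  simp only [zero_add] at h
  convert h using 2 with n
  · rfl
  simp [pS, ContinuousMultilinearMap.mkPiRing_apply, mul_comm]

lemma hderiv {y : ℝ} (hy : |y| < 1) :
    HasSum (fun n : ℕ => ((n:ℝ)+1) * aC (n+1) * y ^ n) (deriv pS.sum y) := by
  have hd := hball.fderiv.hasSum (by simpa using mem_ball hy)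
  simp only [zero_add, sub_zero] at hd
  have h2 := (ContinuousLinearMap.apply ℝ ℝ (1:ℝ)).hasSum hd
  have h3 : ∀ n : ℕ, (ContinuousLinearMap.apply ℝ ℝ (1:ℝ))
      (pS.derivSeries n (fun _ => y)) = ((n:ℝ)+1) * aC (n+1) * y ^ n := by
    intro n
    have e1 : (fun _ : Fin n => y) = fun _ : Fin n => y • (1:ℝ) := by simp
    rw [ContinuousLinearMap.apply_apply, e1,
      ContinuousMultilinearMap.map_smul_univ]
    simp only [Finset.prod_const, Finset.card_univ, Fintype.card_fin,
      ContinuousLinearMap.smul_apply, smul_eq_mul]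
    rw [FormalMultilinearSeries.derivSeries_apply_diag]
    simp [pS, ContinuousMultilinearMap.mkPiRing_apply, nsmul_eq_mul]
    ring
  rw [funext h3] at h2
  convert h2 using 1
  · rfl
  · rfl

lemma ode {y : ℝ} (hy : |y| < 1) :
    (1 - y) * deriv pS.sum y = (1/8) * pS.sum y := by
  have hD := hderiv hy
  have h1 : HasSum (fun n : ℕ => ((n:ℝ)+1) * aC (n+1) * y^(n+1))
      (y * deriv pS.sum y) := by
    have := hD.mul_left y
    convert this using 2 with n
    · rfl
    ring
  have h2 : HasSum (fun n : ℕ => (n:ℝ) * aC n * y^n) (y * deriv pS.sum y) := by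
    have := (hasSum_nat_add_iff (f := fun n : ℕ => (n:ℝ) * aC n * y^n) 1).1 (by
      convert h1 using 2 with n
      · rfl
      push_cast
      ring)
    simpa using this
  have h3 := hD.sub h2
  have h4 : (fun n : ℕ => ((n:ℝ)+1) * aC (n+1) * y^n - (n:ℝ) * aC n * y^n)
      = fun n : ℕ => (1/8) * (aC n * y^n) := by
    funext n
    linear_combination y ^ n * aC_rec n
  rw [h4] at h3
  have h5 := (hsum hy).mul_left (1/8)
  have := h3.unique h5
  ring_nf
  ring_nf at this
  linarith [this]

lemma Gderiv {y : ℝ} (hy : |y| < 1) :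
    HasDerivAt (fun x => Real.exp ((1/8) * Real.log (1-x)) * pS.sum x) 0 y := by
  have h1y : (1:ℝ) - y ≠ 0 := by
    have := abs_lt.1 hy; intro h; linarith
  have hsub : HasDerivAt (fun x : ℝ => 1 - x) (-1) y := by
    simpa using (hasDerivAt_id y).const_sub 1
  have hlog : HasDerivAt (fun x => Real.log (1-x)) ((1-y)⁻¹ * (-1)) y :=
    (Real.hasDerivAt_log h1y).comp y hsub
  have hexp : HasDerivAt (fun x => Real.exp ((1/8) * Real.log (1-x)))
      (Real.exp ((1/8) * Real.log (1-y)) * ((1/8) * ((1-y)⁻¹ * (-1)))) y :=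
    (hlog.const_mul (1/8)).exp
  have hf : HasDerivAt pS.sum (deriv pS.sum y) y :=
    ((hball.analyticAt_of_mem (by simpa using mem_ball hy)).differentiableAt).hasDerivAt
  have := hexp.mul hf
  convert this using 1
  · rfl
  · rfl
  · rfl
  have hode := ode hy
  have hD : deriv pS.sum y = (1/8) * pS.sum y / (1-y) := by
    field_simp at hode ⊢
    linarith [hode]
  rw [hD]
  field_simp
  ring

lemma sum_zero : pS.sum 0 = 1 := by
  have h := hsum (y := 0) (by norm_num)
  have h2 : HasSum (fun n : ℕ => aC n * (0:ℝ)^n) 1 := by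
    convert hasSum_single (f := fun n : ℕ => aC n * (0:ℝ)^n) 0
      (fun b hb => by simp [zero_pow hb]) using 1
    simp [aC_zero]
  exact h.unique h2

lemma sum_eq {t : ℝ} (ht : |t| < 1) :
    pS.sum t = Real.exp (-(1/8) * Real.log (1-t)) := by
  have hmem : ∀ {y : ℝ}, |y| < 1 → y ∈ Metric.ball (0:ℝ) 1 := fun hy => by
    simpa [Metric.mem_ball, Real.dist_eq] using hy
  have habs : ∀ {y : ℝ}, y ∈ Metric.ball (0:ℝ) 1 → |y| < 1 := fun hy => by
    simpa [Metric.mem_ball, Real.dist_eq] using hy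
  have hG := (convex_ball (0:ℝ) 1).is_const_of_fderivWithin_eq_zero
    (f := fun x => Real.exp ((1/8) * Real.log (1-x)) * pS.sum x)
    (fun x hx => ((Gderiv (habs hx)).differentiableAt).differentiableWithinAt)
    (fun x hx => by
      rw [fderivWithin_of_isOpen Metric.isOpen_ball hx,
        (Gderiv (habs hx)).hasFDerivAt.fderiv]
      ext
      simp)
    (hmem ht) (hmem (y := 0) (by norm_num))
  simp only [sub_zero, Real.log_one, mul_zero, Real.exp_zero, one_mul, sum_zero,
    mul_one] at hG
  rw [neg_mul, Real.exp_neg]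
  exact eq_inv_of_mul_eq_one_right hG


lemma recZ (hbar : ℝ) (Z : MvPowerSeries ℕ ℝ)
    (hnorm : MvPowerSeries.coeff 0 Z = 1)
    (hvir : ∀ k : ℕ,
      ((Nat.doubleFactorial (2 * k + 1) : ℕ) : ℝ) • pd k Z = Lhat hbar k Z) :
    ∀ n : ℕ, ((n:ℝ)+1) * MvPowerSeries.coeff (Finsupp.single 0 (n+1)) Z
      = ((1:ℝ)/8 + n) * MvPowerSeries.coeff (Finsupp.single 0 n) Z := by
  intro n
  have h := congrFun (hvir 0) (Finsupp.single 0 n)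
  simp only [Lhat, ↓reduceIte, smul_zero, zero_add, Pi.add_apply, Pi.smul_apply,
    smul_eq_mul, pd, dilatationTerm] at h
  change (_ : ℝ) • pd 0 Z _ = dilatationTerm 0 Z _ + _ at h
  rw [show pd 0 Z = fun m => ((m 0 : ℝ) + 1) * Z (m + Finsupp.single 0 1) from rfl] at h
  rw [show dilatationTerm 0 Z = fun m => ∑ i ∈ m.support,
    ((Nat.doubleFactorial (2 * i + 2 * 0 + 1) : ℝ) /
        (Nat.doubleFactorial (2 * i - 1) : ℝ)) *
      (MvPowerSeries.coeff m (MvPowerSeries.X i * pd (i + 0) Z)) from rfl] at h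
  norm_num [Nat.doubleFactorial, Finsupp.single_eq_same, ← Finsupp.single_add] at h
  rw [MvPowerSeries.coeff_apply, MvPowerSeries.coeff_apply]
  cases n with
  | zero =>
    simp only [Finsupp.single_zero, Finsupp.support_zero, Finset.sum_empty, zero_add,
      Nat.cast_zero] at h ⊢
    rw [show (((1:ℝ)/8) • Z) 0 = (1/8) * Z 0 from rfl] at h
    rw [show Z 0 = 1 from hnorm] at h ⊢
    linarith [h]
  | succ m =>
    rw [Finsupp.support_single_ne_zero 0 (Nat.succ_ne_zero m), Finset.sum_singleton,
      MvPowerSeries.X_def, MvPowerSeries.coeff_monomial_mul] at h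
    rw [if_pos (Finsupp.single_le_iff.2 (by simp))] at h
    rw [show (Finsupp.single 0 (m+1) - Finsupp.single 0 1 : ℕ →₀ ℕ) = Finsupp.single 0 m by
      ext j; simp only [Finsupp.tsub_apply, Finsupp.single_apply]; split <;> simp] at h
    rw [show MvPowerSeries.coeff (Finsupp.single 0 m) (pd 0 Z)
        = ((m:ℝ)+1) * Z (Finsupp.single 0 (m+1)) by
      rw [MvPowerSeries.coeff_apply]
      show ((Finsupp.single 0 m) 0 + 1 : ℝ) * _ = _
      rw [Finsupp.single_eq_same, ← Finsupp.single_add]] at h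
    rw [show (((1:ℝ)/8) • Z) (Finsupp.single 0 (m+1)) = (1/8) * Z (Finsupp.single 0 (m+1))
      from rfl] at h
    simp only [Nat.doubleFactorial, show Nat.doubleFactorial 0 = 1 from rfl] at h
    push_cast at h ⊢
    linarith [h]

/-- If the formal power series `Z` (normalised by `Z(0) = 1`) satisfies the
Virasoro-type constraints `(2k+1)!! ∂Z/∂t_k = L̂_k Z` for all `k ≥ 0`, then its
restriction to `t₁ = t₂ = ⋯ = 0` is `(1−t₀)^{−1/8}`, i.e.
`log Z(t₀,0,0,…) = −(1/8) log(1−t₀)`: coefficientwise,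
`coeff_{t₀ⁿ} Z = (∏_{j<n} (1/8 + j))/n!`, and for `|t₀| < 1` the restricted
series sums to `exp(−(1/8) log(1−t₀))`. -/
theorem stmt18 (hbar : ℝ) (Z : MvPowerSeries ℕ ℝ)
    (hnorm : MvPowerSeries.coeff 0 Z = 1)
    (hvir : ∀ k : ℕ,
      ((Nat.doubleFactorial (2 * k + 1) : ℕ) : ℝ) • pd k Z = Lhat hbar k Z) :
    (∀ n : ℕ, MvPowerSeries.coeff (Finsupp.single 0 n) Z =
      (∏ j ∈ Finset.range n, ((1 : ℝ) / 8 + (j : ℝ))) / (Nat.factorial n : ℝ)) ∧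
    ∀ t₀ : ℝ, |t₀| < 1 →
      HasSum (fun n : ℕ =>
          MvPowerSeries.coeff (Finsupp.single 0 n) Z * t₀ ^ n)
        (Real.exp (-(1 / 8) * Real.log (1 - t₀))) := by
  have hA : ∀ n : ℕ, MvPowerSeries.coeff (Finsupp.single 0 n) Z = aC n := by
    intro n
    induction n with
    | zero => simpa [aC_zero] using hnorm
    | succ m ih =>
      have h := recZ hbar Z hnorm hvir m
      rw [ih] at h
      rw [← aC_rec m] at h
      have hm : ((m:ℝ)+1) ≠ 0 := by positivity
      exact mul_left_cancel₀ hm h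
  refine ⟨fun n => hA n, fun t ht => ?_⟩
  have h := hsum ht
  rw [sum_eq ht] at h
  simp only [hA]
  exact h
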